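/- If an F-algebra A (finitely generated) does not have property τ, then the matrix algebra M_d(A) does not have property τ for any d ≥ 1. -/

import Mathlib

open Module

/-- Property τ for a finitely generated `F`-algebra `A` with respect to a finite set
`S ⊆ A`. -/
def HasTau (F : Type) [Field F] (A : Type) [Ring A] [Algebra F A] (S : Finset A) : Prop :=
  ∃ ε : ℝ, 0 < ε ∧
    ∀ (V : Type) [AddCommGroup V] [Module F V] [FiniteDimensional F V]
      (ρ : A →ₐ[F] Module.End F V),
      (∃ v : V, v ≠ 0) →
      (∀ U : Submodule F V, (∀ a : A, U.map (ρ a) ≤ U) → U = ⊥ ∨ U = ⊤) →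
      ∀ W : Submodule F V, (finrank F W : ℝ) ≤ (finrank F V : ℝ) / 2 →
        ((finrank F ↥(W ⊔ ⨆ s ∈ S, W.map (ρ s))) : ℝ) ≥ (1 + ε) * finrank F W

section Aux

variable {F : Type} [Field F] {A : Type} [Ring A] [Algebra F A]
  {V : Type} [AddCommGroup V] [Module F V] {d : ℕ}

private theorem rawApply (ρ : A →ₐ[F] Module.End F V) {d : ℕ} (M : Matrix (Fin d) (Fin d) A)
    (v : Fin d → V) (i : Fin d) :
    (LinearMap.pi fun i => ∑ j, (ρ (M i j)).comp (LinearMap.proj j)) v i = ∑ j, ρ (M i j) (v j) := by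
  simp [LinearMap.pi_apply, LinearMap.sum_apply]

/-- The matrix representation on `Fin d → V` induced by a representation `ρ` of `A`. -/
noncomputable def matRep (ρ : A →ₐ[F] Module.End F V) (d : ℕ) :
    Matrix (Fin d) (Fin d) A →ₐ[F] Module.End F (Fin d → V) where
  toFun M := LinearMap.pi fun i => ∑ j, (ρ (M i j)).comp (LinearMap.proj j)
  map_one' := by
    refine LinearMap.ext fun v => funext fun i => ?_
    rw [rawApply, Finset.sum_eq_single i]
    · simp [Matrix.one_apply]
    · intro j _ hj
      simp [Matrix.one_apply, Ne.symm hj]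
    · simp
  map_mul' M N := by
    refine LinearMap.ext fun v => funext fun i => ?_
    have : ∀ v i, ((LinearMap.pi fun i => ∑ j, (ρ ((M * N) i j)).comp (LinearMap.proj j)) :
        Module.End F (Fin d → V)) v i = _ := fun v i => rawApply ρ (M * N) v i
    rw [this, Module.End.mul_apply, rawApply]
    simp only [Matrix.mul_apply, map_sum, LinearMap.sum_apply, map_mul,
      Module.End.mul_apply, rawApply]
    rw [Finset.sum_comm]
  map_zero' := by
    refine LinearMap.ext fun v => funext fun i => ?_
    rw [rawApply]
    simp
  map_add' M N := by
    refine LinearMap.ext fun v => funext fun i => ?_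
    rw [LinearMap.add_apply]
    show _ = ((_ : Module.End F (Fin d → V)) v + (_ : Module.End F (Fin d → V)) v) i
    rw [Pi.add_apply, rawApply, rawApply, rawApply, ← Finset.sum_add_distrib]
    simp [map_add]
  commutes' c := by
    refine LinearMap.ext fun v => funext fun i => ?_
    rw [rawApply, Finset.sum_eq_single i]
    · simp [Matrix.algebraMap_matrix_apply, Module.algebraMap_end_apply,
        Algebra.algebraMap_eq_smul_one]
    · intro j _ hj
      simp [Matrix.algebraMap_matrix_apply, Ne.symm hj]
    · simp

theorem matRep_apply (ρ : A →ₐ[F] Module.End F V) (M : Matrix (Fin d) (Fin d) A)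
    (v : Fin d → V) (i : Fin d) :
    matRep ρ d M v i = ∑ j, ρ (M i j) (v j) := rawApply ρ M v i

theorem matRep_stdBasisMatrix (ρ : A →ₐ[F] Module.End F V) (i j : Fin d) (a : A)
    (v : Fin d → V) :
    matRep ρ d (Matrix.single i j a) v = Pi.single i (ρ a (v j)) := by
  funext i'
  rw [matRep_apply]
  by_cases h : i' = i
  · subst h
    rw [Finset.sum_eq_single j, Pi.single_eq_same]
    · simp [Matrix.single]
    · intro k _ hk
      simp [Matrix.single, Ne.symm hk]
    · simp
  · rw [Pi.single_eq_of_ne h]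
    apply Finset.sum_eq_zero
    intro k _
    simp [Matrix.single, Ne.symm h]

theorem matRep_diagonal (ρ : A →ₐ[F] Module.End F V) (a : A) (v : Fin d → V) (i : Fin d) :
    matRep ρ d (Matrix.diagonal fun _ => a) v i = ρ a (v i) := by
  rw [matRep_apply, Finset.sum_eq_single i]
  · simp
  · intro k _ hk
    simp [Matrix.diagonal_apply_ne _ (Ne.symm hk)]
  · simp

end Aux

section Aux2

variable {F : Type} [Field F] {V : Type} [AddCommGroup V] [Module F V] {d : ℕ}

/-- The product of submodules is equivalent to the corresponding pi submodule. -/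
noncomputable def piSubEquiv (p : Fin d → Submodule F V) :
    (∀ i, ↥(p i)) ≃ₗ[F] ↥(Submodule.pi Set.univ p) where
  toFun f := ⟨fun i => f i, fun i _ => (f i).2⟩
  invFun g := fun i => ⟨g.1 i, g.2 i trivial⟩
  map_add' f g := rfl
  map_smul' c f := rfl
  left_inv f := rfl
  right_inv g := rfl

theorem finrank_piSub [FiniteDimensional F V] (p : Fin d → Submodule F V) :
    finrank F ↥(Submodule.pi Set.univ p) = ∑ i, finrank F ↥(p i) := by
  rw [← (piSubEquiv p).finrank_eq, Module.finrank_pi_fintype]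

end Aux2

/-- If the finitely generated `F`-algebra `A` does not have property τ, then neither
does the matrix algebra `M_d(A)` (with generating set the matrix units together with
the scalar matrices of the generators of `A`). -/
theorem matrix_algebra_not_hasTau_of_not_hasTau
    (F : Type) [Field F] (A : Type) [Ring A] [Algebra F A] [DecidableEq A]
    (S : Finset A) (hS : Algebra.adjoin F (S : Set A) = ⊤)
    (hA : ¬ HasTau F A S) (d : ℕ) (hd : 1 ≤ d) :
    ¬ HasTau F (Matrix (Fin d) (Fin d) A)
      ((Finset.univ.image fun p : Fin d × Fin d => Matrix.single p.1 p.2 (1 : A)) ∪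
        S.image fun s => Matrix.diagonal fun _ => s) := by
  intro hMd
  apply hA
  obtain ⟨ε, hε, hP⟩ := hMd
  refine ⟨ε, hε, ?_⟩
  intro V _ _ _ ρ hne hirr W hW
  obtain ⟨v0, hv0⟩ := hne
  set i0 : Fin d := ⟨0, hd⟩ with hi0
  set ρ' := matRep ρ d with hρ'
  set W' : Submodule F (Fin d → V) := Submodule.pi Set.univ (fun _ => W) with hW'def
  -- nonzero vector
  have hne' : ∃ v : Fin d → V, v ≠ 0 := by
    refine ⟨fun _ => v0, fun h => hv0 ?_⟩
    exact congrFun h i0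
  -- irreducibility of Fin d → V
  have hirr' : ∀ U : Submodule F (Fin d → V),
      (∀ M : Matrix (Fin d) (Fin d) A, U.map (ρ' M) ≤ U) → U = ⊥ ∨ U = ⊤ := by
    intro U hU
    by_cases hUbot : U = ⊥
    · exact Or.inl hUbot
    right
    -- a nonzero element
    obtain ⟨u, huU, hu0⟩ := Submodule.exists_mem_ne_zero_of_ne_bot hUbot
    obtain ⟨k, hk⟩ : ∃ k, u k ≠ 0 := by
      by_contra h
      push_neg at h
      exact hu0 (funext h)
    -- the comap submodule
    set U' : Submodule F V := U.comap (LinearMap.single F (fun _ : Fin d => V) i0) with hU'def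
    have hsingle : ∀ (v : V), (LinearMap.single F (fun _ : Fin d => V) i0) v = Pi.single i0 v :=
      fun v => rfl
    have hU'inv : ∀ a : A, U'.map (ρ a) ≤ U' := by
      rintro a _ ⟨v, hv, rfl⟩
      have : Pi.single i0 (ρ a v) =
          ρ' (Matrix.single i0 i0 a) (Pi.single i0 v) := by
        rw [hρ', matRep_stdBasisMatrix, Pi.single_eq_same]
      simp only [hU'def, Submodule.mem_comap, hsingle] at hv ⊢
      rw [this]
      exact hU (Matrix.single i0 i0 a) ⟨Pi.single i0 v, hv, rfl⟩
    have hsingleU : Pi.single i0 (u k) ∈ U := by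
      have : Pi.single i0 (u k) = ρ' (Matrix.single i0 k (1 : A)) u := by
        rw [hρ', matRep_stdBasisMatrix, map_one, Module.End.one_apply]
      rw [this]
      exact hU _ ⟨u, huU, rfl⟩
    have hU'top : U' = ⊤ := by
      rcases hirr U' hU'inv with h | h
      · exfalso
        have : u k ∈ U' := by
          simp only [hU'def, Submodule.mem_comap, hsingle]
          exact hsingleU
        rw [h, Submodule.mem_bot] at this
        exact hk this
      · exact h
    -- now show U = ⊤
    rw [Submodule.eq_top_iff']
    intro v
    have hv : ∀ i : Fin d, Pi.single i (v i) ∈ U := by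
      intro i
      have hmem : Pi.single i0 (v i) ∈ U := by
        have : v i ∈ U' := hU'top ▸ Submodule.mem_top
        simpa only [hU'def, Submodule.mem_comap, hsingle] using this
      have : Pi.single i (v i) =
          ρ' (Matrix.single i i0 (1 : A)) (Pi.single i0 (v i)) := by
        rw [hρ', matRep_stdBasisMatrix, map_one, Module.End.one_apply, Pi.single_eq_same]
      rw [this]
      exact hU _ ⟨Pi.single i0 (v i), hmem, rfl⟩
    have := Submodule.sum_mem U (fun i (_ : i ∈ Finset.univ) => hv i)
    rwa [Finset.univ_sum_single] at this
  -- dimension of W'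
  have hfW' : finrank F ↥W' = d * finrank F ↥W := by
    rw [hW'def, finrank_piSub, Finset.sum_const, Finset.card_univ, Fintype.card_fin, smul_eq_mul]
  have hfV' : finrank F (Fin d → V) = d * finrank F V := by
    rw [Module.finrank_pi_fintype, Finset.sum_const, Finset.card_univ, Fintype.card_fin,
      smul_eq_mul]
  have hW'half : (finrank F ↥W' : ℝ) ≤ (finrank F (Fin d → V) : ℝ) / 2 := by
    rw [hfW', hfV']
    push_cast
    have hd0 : (0 : ℝ) ≤ d := Nat.cast_nonneg d
    nlinarith
  have hkey := hP (Fin d → V) ρ' hne' hirr' W' hW'half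
  -- bound the big submodule
  set B : Submodule F V := W ⊔ ⨆ s ∈ S, W.map (ρ s) with hBdef
  have hle : (W' ⊔ ⨆ M ∈ ((Finset.univ.image fun p : Fin d × Fin d =>
        Matrix.single p.1 p.2 (1 : A)) ∪ S.image fun s => Matrix.diagonal fun _ => s),
        W'.map (ρ' M)) ≤ Submodule.pi Set.univ (fun _ : Fin d => B) := by
    apply sup_le
    · intro v hv i _
      exact (le_sup_left : W ≤ B) (hv i trivial)
    · apply iSup₂_le
      intro M hM
      rcases Finset.mem_union.1 hM with h | h
      · obtain ⟨p, -, rfl⟩ := Finset.mem_image.1 h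
        rintro _ ⟨v, hv, rfl⟩ i -
        rw [hρ', matRep_stdBasisMatrix, map_one, Module.End.one_apply]
        by_cases hip : i = p.1
        · subst hip
          rw [Pi.single_eq_same]
          exact (le_sup_left : W ≤ B) (hv p.2 trivial)
        · rw [Pi.single_eq_of_ne hip]
          exact B.zero_mem
      · obtain ⟨s, hs, rfl⟩ := Finset.mem_image.1 h
        rintro _ ⟨v, hv, rfl⟩ i -
        rw [hρ']
        show matRep ρ d _ v i ∈ B
        rw [matRep_diagonal]
        refine le_trans (le_biSup (fun s => W.map (ρ s)) hs) le_sup_right ?_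
        exact ⟨v i, hv i trivial, rfl⟩
  -- conclude
  have hfB : finrank F ↥(Submodule.pi Set.univ (fun _ : Fin d => B)) = d * finrank F ↥B := by
    rw [finrank_piSub, Finset.sum_const, Finset.card_univ, Fintype.card_fin, smul_eq_mul]
  have h1 : (finrank F ↥(W' ⊔ ⨆ M ∈ ((Finset.univ.image fun p : Fin d × Fin d =>
        Matrix.single p.1 p.2 (1 : A)) ∪ S.image fun s => Matrix.diagonal fun _ => s),
        W'.map (ρ' M)) : ℝ) ≤ (d : ℝ) * (finrank F ↥B : ℝ) := by
    have := Submodule.finrank_mono hle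
    rw [hfB] at this
    exact_mod_cast this
  rw [hfW'] at hkey
  push_cast at hkey h1
  have hd' : (0 : ℝ) < (d : ℝ) := by
    have : (0 : ℕ) < d := hd
    exact_mod_cast this
  have h2 : (d : ℝ) * ((1 + ε) * (finrank F ↥W : ℝ)) ≤ (d : ℝ) * (finrank F ↥B : ℝ) := by
    nlinarith [hkey, h1]
  have h3 := le_of_mul_le_mul_left h2 hd'
  exact h3
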